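/- Let μ be a probability measure on ℝ that is not a Dirac mass, and t > 0. Define v_t(u) = inf{v > 0 : ∫ dμ(x)/((u−x)²+v²) ≤ 1/t} (with inf ∅ interpreted via the convention that v_t(u)=0 when ∫ dμ(x)/(u−x)² ≤ 1/t). Then v_t(u) → 0 as |u| → ∞. -/

import Mathlib

open MeasureTheory Filter Topology

/-- Let `μ` be a probability measure on `ℝ` that is not a Dirac mass, and `t > 0`. With
`v_t(u) = inf{v > 0 : ∫ dμ(x)/((u−x)²+v²) ≤ 1/t}`, one has `v_t(u) → 0` as `|u| → ∞`. -/
theorem vt_tendsto_zero (μ : Measure ℝ) [IsProbabilityMeasure μ]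
    (hμ : ∀ a : ℝ, μ ≠ Measure.dirac a) (t : ℝ) (ht : 0 < t) :
    Tendsto (fun u : ℝ =>
        sInf {v : ℝ | 0 < v ∧ (∫ x, 1 / ((u - x) ^ 2 + v ^ 2) ∂μ) ≤ 1 / t})
      (cocompact ℝ) (nhds 0) := by
  rw [Metric.tendsto_nhds]
  intro ε hε
  set e := ε / 2 with he
  have he0 : 0 < e := by positivity
  have hδ0 : (0 : ENNReal) < ENNReal.ofReal (e ^ 2 / (2 * t)) := by
    rw [ENNReal.ofReal_pos]; positivity
  -- find a radius R with small tail measure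
  obtain ⟨R, hR⟩ : ∃ R : ℕ,
      μ (Metric.closedBall (0 : ℝ) R)ᶜ < ENNReal.ofReal (e ^ 2 / (2 * t)) := by
    have hanti : Antitone fun n : ℕ => (Metric.closedBall (0 : ℝ) n)ᶜ := by
      intro m n hmn
      exact Set.compl_subset_compl.2 (Metric.closedBall_subset_closedBall (by exact_mod_cast hmn))
    have hinter : ⋂ n : ℕ, (Metric.closedBall (0 : ℝ) n)ᶜ = ∅ := by
      ext x
      simp only [Set.mem_iInter, Set.mem_compl_iff, Metric.mem_closedBall, Real.dist_eq,
        sub_zero, Set.mem_empty_iff_false, iff_false, not_forall, not_not]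
      obtain ⟨n, hn⟩ := exists_nat_ge |x|
      exact ⟨n, hn⟩
    have htend := tendsto_measure_iInter_atTop
      (μ := μ) (s := fun n : ℕ => (Metric.closedBall (0 : ℝ) n)ᶜ)
      (fun n => (measurableSet_closedBall.compl).nullMeasurableSet) hanti
      ⟨0, measure_ne_top μ _⟩
    rw [hinter, measure_empty] at htend
    exact ((tendsto_order.1 htend).2 _ hδ0).exists
  set M := Real.sqrt (2 * t) with hMdef
  have hM0 : 0 ≤ M := Real.sqrt_nonneg _
  have hM : M ^ 2 = 2 * t := Real.sq_sqrt (by positivity)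
  have hmem : {u : ℝ | (R : ℝ) + M < |u|} ∈ cocompact ℝ := by
    rw [Filter.mem_cocompact']
    refine ⟨Metric.closedBall 0 ((R : ℝ) + M), isCompact_closedBall _ _, ?_⟩
    intro u hu
    simp only [Set.mem_compl_iff, Set.mem_setOf_eq, not_lt] at hu
    simpa [Metric.mem_closedBall, Real.dist_eq] using hu
  filter_upwards [hmem] with u hu
  set f : ℝ → ℝ := fun x => 1 / ((u - x) ^ 2 + e ^ 2) with hfdef
  have hden : ∀ x : ℝ, 0 < (u - x) ^ 2 + e ^ 2 := fun x => by positivity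
  have hfc : Continuous f :=
    continuous_const.div (by fun_prop) fun x => (hden x).ne'
  have hfnn : ∀ x, 0 ≤ f x := fun x => le_of_lt (by positivity)
  have hfle : ∀ x, f x ≤ 1 / e ^ 2 := fun x =>
    one_div_le_one_div_of_le (by positivity) (by nlinarith [sq_nonneg (u - x)])
  have hf_int : Integrable f μ := by
    refine (integrable_const (1 / e ^ 2)).mono' hfc.aestronglyMeasurable ?_
    filter_upwards with x
    rw [Real.norm_eq_abs, abs_of_nonneg (hfnn x)]
    exact hfle x
  set A := Metric.closedBall (0 : ℝ) (R : ℕ) with hAdef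
  have hAmeas : MeasurableSet A := measurableSet_closedBall
  have hsplit : (∫ x, f x ∂μ) = (∫ x in A, f x ∂μ) + ∫ x in Aᶜ, f x ∂μ :=
    (integral_add_compl hAmeas hf_int).symm
  -- bound on A
  have hboundA : ∀ x ∈ A, f x ≤ 1 / (2 * t) := by
    intro x hx
    rw [hAdef] at hx
    have hxR : |x| ≤ (R : ℝ) := by
      simpa [Metric.mem_closedBall, Real.dist_eq] using hx
    have h1 : M < |u - x| := by
      have := abs_sub_abs_le_abs_sub u x
      linarith
    have h2 : 2 * t ≤ (u - x) ^ 2 := by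
      have : M ^ 2 ≤ |u - x| ^ 2 := by nlinarith
      rwa [hM, sq_abs] at this
    exact one_div_le_one_div_of_le (by positivity) (by nlinarith [sq_nonneg e])
  have hIA : (∫ x in A, f x ∂μ) ≤ 1 / (2 * t) := by
    have h := norm_setIntegral_le_of_norm_le_const (μ := μ) (s := A) (f := f)
      (measure_lt_top μ A) (C := 1 / (2 * t)) ?_
    · have hμA : (μ A).toReal ≤ 1 := by
        have := measure_mono (Set.subset_univ A) (μ := μ)
        rw [measure_univ] at this
        simpa using ENNReal.toReal_mono (by simp) this
      calc (∫ x in A, f x ∂μ) ≤ ‖∫ x in A, f x ∂μ‖ := le_abs_self _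
        _ ≤ 1 / (2 * t) * (μ A).toReal := h
        _ ≤ 1 / (2 * t) * 1 := by
            apply mul_le_mul_of_nonneg_left hμA (by positivity)
        _ = 1 / (2 * t) := mul_one _
    · intro x hx
      rw [Real.norm_eq_abs, abs_of_nonneg (hfnn x)]
      exact hboundA x hx
  have hIAc : (∫ x in Aᶜ, f x ∂μ) ≤ 1 / (2 * t) := by
    have hμAc : (μ Aᶜ).toReal ≤ e ^ 2 / (2 * t) :=
      ENNReal.toReal_le_of_le_ofReal (by positivity) hR.le
    have h := norm_setIntegral_le_of_norm_le_const (μ := μ) (s := Aᶜ) (f := f)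
      (measure_lt_top μ Aᶜ) (C := 1 / e ^ 2) ?_
    · calc (∫ x in Aᶜ, f x ∂μ) ≤ ‖∫ x in Aᶜ, f x ∂μ‖ := le_abs_self _
        _ ≤ 1 / e ^ 2 * (μ Aᶜ).toReal := h
        _ ≤ 1 / e ^ 2 * (e ^ 2 / (2 * t)) := by
            apply mul_le_mul_of_nonneg_left hμAc (by positivity)
        _ = 1 / (2 * t) := by field_simp
    · intro x hx
      rw [Real.norm_eq_abs, abs_of_nonneg (hfnn x)]
      exact hfle x
  have hItotal : (∫ x, f x ∂μ) ≤ 1 / t := by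
    rw [hsplit]
    have : 1 / (2 * t) + 1 / (2 * t) = 1 / t := by
      field_simp
      norm_num
    linarith
  -- conclude
  set S := {v : ℝ | 0 < v ∧ (∫ x, 1 / ((u - x) ^ 2 + v ^ 2) ∂μ) ≤ 1 / t} with hSdef
  have heS : e ∈ S := ⟨he0, hItotal⟩
  have hbdd : BddBelow S := ⟨0, fun v hv => hv.1.le⟩
  have h1 : sInf S ≤ e := csInf_le hbdd heS
  have h2 : 0 ≤ sInf S := le_csInf ⟨e, heS⟩ fun v hv => hv.1.le
  rw [Real.dist_eq, sub_zero, abs_of_nonneg h2]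
  calc sInf S ≤ e := h1
    _ < ε := by rw [he]; linarith
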